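/- Let Γ be a finite group and (X,T) a free Γ-dynamical system on a compact metric space X. Then dim(X,T) ≥ dim(X)/|Γ|, where dim(X) is the Lebesgue covering dimension of X. -/

import Mathlib

open MeasureTheory Set
open scoped ENNReal Classical

/-- The order of a finite collection of sets at a point: (number of members containing x) − 1. -/
noncomputable def ordAt {X : Type*} (V : Finset (Set X)) (x : X) : ℝ :=
  ((V.filter fun A => x ∈ A).card : ℝ) - 1

/-- A finite open cover. -/
def IsOpenCover {X : Type*} [TopologicalSpace X] (U : Finset (Set X)) : Prop :=
  (∀ A ∈ U, IsOpen A) ∧ ⋃₀ (U : Set (Set X)) = Set.univ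

/-- `Refines U V` : every element of `V` is contained in some element of `U` (V ⪰ U). -/
def Refines {X : Type*} (U V : Finset (Set X)) : Prop :=
  ∀ B ∈ V, ∃ A ∈ U, B ⊆ A

/-- The set of T-invariant Borel probability measures. -/
def invProb {X Γ : Type*} [TopologicalSpace X] [MeasurableSpace X]
    (T : Γ → X ≃ₜ X) : Set (ProbabilityMeasure X) :=
  {μ | ∀ γ : Γ, (μ : Measure X).map (T γ) = (μ : Measure X)}

/-- The capacity of a Borel set with respect to the action:
cap(A,T) = sup over invariant μ of μ(A). -/
noncomputable def cap {X Γ : Type*} [TopologicalSpace X] [MeasurableSpace X]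
    (T : Γ → X ≃ₜ X) (A : Set X) : ℝ≥0∞ :=
  ⨆ μ ∈ invProb T, (μ : Measure X) A

/-- dim(X,T) = sup over finite open covers U of inf over finite open covers V refining U
of sup over invariant μ of ∫ ord(V,x) dμ(x). -/
noncomputable def dimDyn {X Γ : Type*} [TopologicalSpace X] [MeasurableSpace X]
    (T : Γ → X ≃ₜ X) : ℝ≥0∞ :=
  ⨆ U ∈ {U : Finset (Set X) | IsOpenCover U},
    ⨅ V ∈ {V : Finset (Set X) | IsOpenCover V ∧ Refines U V},
      ⨆ μ ∈ invProb T, ENNReal.ofReal (∫ x, ordAt V x ∂(μ : Measure X))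

/-- The Lebesgue covering dimension of X (as an extended nonnegative real), expressed as
sup over finite open covers U of inf over finite open covers V refining U of
sup over x of ord(V,x). -/
noncomputable def covDimE (X : Type*) [TopologicalSpace X] : ℝ≥0∞ :=
  ⨆ U ∈ {U : Finset (Set X) | IsOpenCover U},
    ⨅ V ∈ {V : Finset (Set X) | IsOpenCover V ∧ Refines U V},
      ⨆ x : X, (((V.filter fun A => x ∈ A).card : ℝ≥0∞) - 1)

/-- Auxiliary: pushing forward a finite sum of measures. -/
lemma mapFinsetSum {X Y ι : Type*} [MeasurableSpace X] [MeasurableSpace Y]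
    (s : Finset ι) (μ : ι → Measure X) {f : X → Y} (hf : Measurable f) :
    (∑ i ∈ s, μ i).map f = ∑ i ∈ s, (μ i).map f := by
  classical
  induction s using Finset.induction_on with
  | empty => simp
  | insert _ _ h ih => rw [Finset.sum_insert h, Finset.sum_insert h, Measure.map_add _ _ hf, ih]

/-- Auxiliary: `ordAt V` is measurable when the members of `V` are open. -/
lemma ordAtMeasurable {X : Type*} [MeasurableSpace X] [TopologicalSpace X] [BorelSpace X]
    (V : Finset (Set X)) (hV : ∀ A ∈ V, IsOpen A) : Measurable (ordAt V) := by
  classical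
  have : ordAt V = fun x => (∑ A ∈ V, Set.indicator A (fun _ => (1:ℝ)) x) - 1 := by
    funext x
    simp only [ordAt]
    congr 1
    rw [Finset.card_filter]
    push_cast
    refine Finset.sum_congr rfl fun A hA => ?_
    by_cases hx : x ∈ A <;> simp [hx]
  rw [this]
  apply Measurable.sub _ measurable_const
  exact Finset.measurable_sum _ fun A hA =>
    (measurable_const.indicator ((hV A hA).measurableSet))

/-- Auxiliary: on a covered space, `ordAt V` is nonnegative. -/
lemma ordAtNonneg {X : Type*} [TopologicalSpace X] (V : Finset (Set X))
    (hcov : ⋃₀ (V : Set (Set X)) = Set.univ) (x : X) : 0 ≤ ordAt V x := by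
  have hx : x ∈ ⋃₀ (V : Set (Set X)) := by rw [hcov]; trivial
  obtain ⟨A, hA, hxA⟩ := hx
  have : 0 < (V.filter fun A => x ∈ A).card :=
    Finset.card_pos.2 ⟨A, Finset.mem_filter.2 ⟨hA, hxA⟩⟩
  simp only [ordAt, sub_nonneg]
  exact_mod_cast this

/-- Key step: the uniform measure on the orbit of `x₀` is invariant, and gives
integral of `ordAt V` at least `ordAt V x₀ / |Γ|`. -/
lemma keyLemma {X Γ : Type*} [MetricSpace X] [CompactSpace X] [MeasurableSpace X] [BorelSpace X]
    [Group Γ] [Fintype Γ] (T : Γ → X ≃ₜ X)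
    (hT : ∀ γ γ' : Γ, ∀ x : X, T (γ * γ') x = T γ (T γ' x))
    (V : Finset (Set X)) (hVopen : ∀ A ∈ V, IsOpen A)
    (hVcov : ⋃₀ (V : Set (Set X)) = Set.univ) (x₀ : X) :
    (((V.filter fun A => x₀ ∈ A).card : ℝ≥0∞) - 1) / (Fintype.card Γ : ℝ≥0∞)
      ≤ ⨆ μ ∈ invProb T, ENNReal.ofReal (∫ x, ordAt V x ∂(μ : Measure X)) := by
  classical
  set c : ℝ≥0∞ := (Fintype.card Γ : ℝ≥0∞) with hc
  have hc0 : c ≠ 0 := by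
    simp [hc, Fintype.card_ne_zero]
  have hcT : c ≠ ⊤ := by simp [hc]
  set ν : Measure X := c⁻¹ • ∑ γ : Γ, Measure.dirac (T γ x₀) with hν
  have hprob : IsProbabilityMeasure ν := by
    constructor
    rw [hν, Measure.smul_apply, Measure.finset_sum_apply]
    simp only [Measure.dirac_apply_of_mem (Set.mem_univ _), Finset.sum_const,
      Finset.card_univ, nsmul_eq_mul, mul_one, smul_eq_mul]
    exact ENNReal.inv_mul_cancel hc0 hcT
  have hT1 : T (1 : Γ) x₀ = x₀ := by
    have h := hT 1 1 x₀
    rw [one_mul] at h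
    exact ((T (1:Γ)).injective h).symm
  set μ : ProbabilityMeasure X := ⟨ν, hprob⟩ with hμ
  have hinv : μ ∈ invProb T := by
    intro γ
    show ν.map (T γ) = ν
    rw [hν, Measure.map_smul, mapFinsetSum _ _ (T γ).continuous.measurable]
    congr 1
    simp only [Measure.map_dirac' (T γ).continuous.measurable]
    refine Fintype.sum_equiv (Equiv.mulLeft γ) _ _ fun γ' => ?_
    rw [← hT]
    rfl
  -- integrability wrt dirac
  have hm : Measurable (ordAt V) := ordAtMeasurable V hVopen
  have hint : ∀ y : X, Integrable (ordAt V) (Measure.dirac y) := by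
    intro y
    refine ⟨hm.aestronglyMeasurable, HasFiniteIntegral.of_bounded
      (C := (V.card : ℝ) + 1) (ae_of_all _ fun x => ?_)⟩
    have h1 : (0:ℝ) ≤ ((V.filter fun A => x ∈ A).card : ℝ) := by positivity
    have h2 : ((V.filter fun A => x ∈ A).card : ℝ) ≤ (V.card : ℝ) := by
      exact_mod_cast Finset.card_filter_le V _
    rw [Real.norm_eq_abs, ordAt, abs_le]
    constructor <;> linarith
  have hintval : ∫ x, ordAt V x ∂ν = c⁻¹.toReal * ∑ γ : Γ, ordAt V (T γ x₀) := by
    rw [hν, integral_smul_measure, integral_finset_sum_measure fun γ _ => hint _]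
    simp [integral_dirac]
  have hsum : ordAt V x₀ ≤ ∑ γ : Γ, ordAt V (T γ x₀) := by
    have := Finset.single_le_sum (f := fun γ => ordAt V (T γ x₀))
      (fun γ _ => ordAtNonneg V hVcov _) (Finset.mem_univ (1:Γ))
    simpa [hT1] using this
  have hbound : ordAt V x₀ / (Fintype.card Γ : ℝ) ≤ ∫ x, ordAt V x ∂ν := by
    rw [hintval]
    have hcinv : c⁻¹.toReal = 1 / (Fintype.card Γ : ℝ) := by
      rw [hc, ENNReal.toReal_inv, one_div, ENNReal.toReal_natCast]
    rw [hcinv, div_eq_mul_inv, one_div, mul_comm]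
    exact mul_le_mul_of_nonneg_left hsum (by positivity)
  -- translate LHS
  have hcard : (1:ℝ) ≤ ((V.filter fun A => x₀ ∈ A).card : ℝ) := by
    have hx : x₀ ∈ ⋃₀ (V : Set (Set X)) := by rw [hVcov]; trivial
    obtain ⟨A, hA, hxA⟩ := hx
    have : 0 < (V.filter fun A => x₀ ∈ A).card :=
      Finset.card_pos.2 ⟨A, Finset.mem_filter.2 ⟨hA, hxA⟩⟩
    exact_mod_cast this
  have hk : (0:ℝ) < (Fintype.card Γ : ℝ) := by positivity
  have hlhs : (((V.filter fun A => x₀ ∈ A).card : ℝ≥0∞) - 1) / c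
      = ENNReal.ofReal (ordAt V x₀ / (Fintype.card Γ : ℝ)) := by
    rw [ENNReal.ofReal_div_of_pos hk, ordAt, ENNReal.ofReal_sub _ zero_le_one]
    simp [hc]
  rw [hlhs]
  calc ENNReal.ofReal (ordAt V x₀ / (Fintype.card Γ : ℝ))
      ≤ ENNReal.ofReal (∫ x, ordAt V x ∂ν) := ENNReal.ofReal_le_ofReal hbound
    _ ≤ ⨆ μ ∈ invProb T, ENNReal.ofReal (∫ x, ordAt V x ∂(μ : Measure X)) :=
        le_biSup (f := fun μ : ProbabilityMeasure X =>
          ENNReal.ofReal (∫ x, ordAt V x ∂(μ : Measure X))) hinv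

/-- For a free action of a finite group Γ on a compact metric space,
dim(X,T) ≥ dim(X)/|Γ|. -/
theorem stmt12 {X Γ : Type*} [MetricSpace X] [CompactSpace X] [MeasurableSpace X] [BorelSpace X]
    [Group Γ] [Fintype Γ] (T : Γ → X ≃ₜ X)
    (hT : ∀ γ γ' : Γ, ∀ x : X, T (γ * γ') x = T γ (T γ' x))
    (hfree : ∀ x : X, ∀ γ γ' : Γ, T γ x = T γ' x → γ = γ') :
    covDimE X / (Fintype.card Γ : ℝ≥0∞) ≤ dimDyn T := by
  rw [covDimE, dimDyn, ENNReal.iSup_div]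
  refine iSup_mono fun U => ?_
  rw [ENNReal.iSup_div]
  refine iSup_mono fun hU => ?_
  refine le_iInf₂ fun V hV => ?_
  calc (⨅ V ∈ {V : Finset (Set X) | IsOpenCover V ∧ Refines U V},
          ⨆ x : X, (((V.filter fun A => x ∈ A).card : ℝ≥0∞) - 1)) / (Fintype.card Γ : ℝ≥0∞)
      ≤ (⨆ x : X, (((V.filter fun A => x ∈ A).card : ℝ≥0∞) - 1)) / (Fintype.card Γ : ℝ≥0∞) :=
        ENNReal.div_le_div_right (iInf₂_le V hV) _
    _ ≤ ⨆ μ ∈ invProb T, ENNReal.ofReal (∫ x, ordAt V x ∂(μ : Measure X)) := by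
        rw [ENNReal.iSup_div]
        exact iSup_le fun x₀ => keyLemma T hT V hV.1.1 hV.1.2 x₀
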